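/- Let N be a positive integer and let A be a real symmetric positive-definite N×N matrix admitting a decomposition A = U·D·Uᵀ, where U is an upper unit-triangular matrix (U_{ii} = 1 for all i and U_{ij} = 0 for i > j) and D is a diagonal matrix with diagonal entries d_0, …, d_{N−1}. Let λ_min and λ_max denote the smallest and largest eigenvalues of A. Then λ_min ≤ d_i ≤ λ_max for every i; in particular, all d_i are strictly positive and (max_i d_i)/(min_i d_i) ≤ λ_max/λ_min, the condition number of A. -/

import Mathlib

open Matrix

private lemma rayleigh_bounds {N : ℕ} (A : Matrix (Fin N) (Fin N) ℝ) (hA : A.IsHermitian)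
    (lmin lmax : ℝ) (hlo : ∀ j, lmin ≤ hA.eigenvalues j) (hhi : ∀ j, hA.eigenvalues j ≤ lmax)
    (hpos : ∀ j, 0 ≤ hA.eigenvalues j) (x : Fin N → ℝ) :
    lmin * (x ⬝ᵥ x) ≤ x ⬝ᵥ A *ᵥ x ∧ x ⬝ᵥ A *ᵥ x ≤ lmax * (x ⬝ᵥ x) ∧
      (A *ᵥ x) ⬝ᵥ (A *ᵥ x) ≤ lmax * (x ⬝ᵥ A *ᵥ x) := by
  set V := (hA.eigenvectorUnitary : Matrix (Fin N) (Fin N) ℝ) with hV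
  set μ := hA.eigenvalues with hμ
  set c := star V *ᵥ x with hc
  have hstar : star V = Vᵀ := by
    rw [Matrix.star_eq_conjTranspose, Matrix.conjTranspose_eq_transpose_of_trivial]
  have hVsV : V * star V = 1 := (Unitary.mem_iff.mp hA.eigenvectorUnitary.prop).2
  have hsVV : star V * V = 1 := (Unitary.mem_iff.mp hA.eigenvectorUnitary.prop).1
  have h1 : x ⬝ᵥ A *ᵥ x = ∑ j, μ j * (c j) ^ 2 := by
    conv_lhs => rw [hA.spectral_theorem, Unitary.conjStarAlgAut_apply, ← Matrix.mulVec_mulVec, ← Matrix.mulVec_mulVec,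
      Matrix.dotProduct_mulVec, ← Matrix.mulVec_transpose, ← hstar, ← hV, ← hc]
    simp [Matrix.mulVec_diagonal, dotProduct, sq, mul_comm, mul_left_comm, hμ]
  have h2 : x ⬝ᵥ x = ∑ j, (c j) ^ 2 := by
    have : c ⬝ᵥ c = x ⬝ᵥ x := by
      rw [hc, hstar, Matrix.dotProduct_mulVec, Matrix.vecMul_transpose,
        Matrix.mulVec_mulVec, ← hstar, hVsV, Matrix.one_mulVec]
    rw [← this]
    simp [dotProduct, sq]
  have h3 : (A *ᵥ x) ⬝ᵥ (A *ᵥ x) = ∑ j, (μ j) ^ 2 * (c j) ^ 2 := by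
    have hAx : A *ᵥ x = V *ᵥ fun j => μ j * c j := by
      conv_lhs => rw [hA.spectral_theorem, Unitary.conjStarAlgAut_apply]
      simp only [← Matrix.mulVec_mulVec]
      rw [← hV, ← hc]
      ext j
      simp [Matrix.mulVec, dotProduct, Matrix.diagonal_apply, ite_mul, zero_mul,
        Finset.sum_ite_eq, hμ]
    rw [hAx, Matrix.dotProduct_mulVec, ← Matrix.vecMul_transpose,
      Matrix.vecMul_vecMul, ← hstar, hsVV, Matrix.vecMul_one]
    simp only [dotProduct]
    exact Finset.sum_congr rfl fun j _ => by ring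
  refine ⟨?_, ?_, ?_⟩
  · rw [h1, h2, Finset.mul_sum]
    exact Finset.sum_le_sum fun j _ =>
      mul_le_mul_of_nonneg_right (hlo j) (sq_nonneg _)
  · rw [h1, h2, Finset.mul_sum]
    exact Finset.sum_le_sum fun j _ =>
      mul_le_mul_of_nonneg_right (hhi j) (sq_nonneg _)
  · rw [h1, h3, Finset.mul_sum]
    refine Finset.sum_le_sum fun j _ => ?_
    have : μ j ^ 2 * c j ^ 2 = μ j * (μ j * c j ^ 2) := by ring
    rw [this]
    exact mul_le_mul_of_nonneg_right (hhi j)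
      (mul_nonneg (hpos j) (sq_nonneg _))

/-- In a UDU decomposition A = U D Uᵀ of a symmetric positive-definite matrix,
the diagonal entries of D lie between the smallest and largest eigenvalues of A;
in particular they are positive and their ratio is at most the condition number. -/
theorem UDU_diagonal_eigenvalue_bounds
    (N : ℕ) (hN : 0 < N) (A U : Matrix (Fin N) (Fin N) ℝ)
    (d : Fin N → ℝ) (hA : A.IsHermitian) (hPD : A.PosDef)
    (hU1 : ∀ i, U i i = 1) (hU0 : ∀ i j, j < i → U i j = 0)
    (hdecomp : A = U * Matrix.diagonal d * Uᵀ)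
    (lmin lmax : ℝ)
    (hmin : IsLeast (Set.range hA.eigenvalues) lmin)
    (hmax : IsGreatest (Set.range hA.eigenvalues) lmax) :
    (∀ i, lmin ≤ d i ∧ d i ≤ lmax) ∧ (∀ i, 0 < d i) ∧
      (Finset.univ.sup' (Finset.univ_nonempty_iff.mpr (Fin.pos_iff_nonempty.mp hN)) d) /
        (Finset.univ.inf' (Finset.univ_nonempty_iff.mpr (Fin.pos_iff_nonempty.mp hN)) d)
        ≤ lmax / lmin := by
  -- eigenvalue positivity and bounds
  have heigpos : ∀ j, 0 < hA.eigenvalues j := fun j => hPD.eigenvalues_pos j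
  have hlo : ∀ j, lmin ≤ hA.eigenvalues j := fun j => hmin.2 ⟨j, rfl⟩
  have hhi : ∀ j, hA.eigenvalues j ≤ lmax := fun j => hmax.2 ⟨j, rfl⟩
  have hlminpos : 0 < lmin := by
    obtain ⟨j, hj⟩ := hmin.1
    rw [← hj]; exact heigpos j
  have hray := rayleigh_bounds A hA lmin lmax hlo hhi (fun j => (heigpos j).le)
  -- U is invertible
  have hBT : U.BlockTriangular id := fun i j h => hU0 i j h
  have hdetU : U.det = 1 := by
    rw [Matrix.det_of_upperTriangular hBT]
    simp [hU1]
  have hdetUT : (Uᵀ).det = 1 := by rw [Matrix.det_transpose, hdetU]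
  have hUTinv : Uᵀ * (Uᵀ)⁻¹ = 1 := Matrix.mul_nonsing_inv _ (by rw [hdetUT]; exact isUnit_one)
  -- the key bounds for each i
  have key : ∀ i, lmin ≤ d i ∧ d i ≤ lmax ∧ 0 < d i := by
    intro i
    set e : Fin N → ℝ := Pi.single i 1 with he
    set z : Fin N → ℝ := (Uᵀ)⁻¹ *ᵥ e with hzdef
    have hz : Uᵀ *ᵥ z = e := by
      rw [hzdef, Matrix.mulVec_mulVec, hUTinv, Matrix.one_mulVec]
    -- coordinates of z below i vanish
    have hz0 : ∀ n : ℕ, ∀ j : Fin N, (j : ℕ) = n → j < i → z j = 0 := by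
      intro n
      induction n using Nat.strong_induction_on with
      | _ n ih =>
        intro j hjn hji
        have hj := congrFun hz j
        have hej : e j = 0 := by
          rw [he]; exact Pi.single_eq_of_ne (ne_of_lt hji) 1
        rw [hej] at hj
        have hsum : (Uᵀ *ᵥ z) j = ∑ k, U k j * z k := by
          simp [Matrix.mulVec, dotProduct, Matrix.transpose_apply]
        rw [hsum] at hj
        have : ∑ k, U k j * z k = U j j * z j := by
          refine Finset.sum_eq_single j (fun k _ hk => ?_) (by simp)
          rcases lt_or_gt_of_ne hk with h | h
          · have : z k = 0 := ih (k : ℕ) (hjn ▸ h) k rfl (h.trans hji)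
            rw [this, mul_zero]
          · rw [hU0 k j h, zero_mul]
        rw [this, hU1 j, one_mul] at hj
        exact hj
    have hz0' : ∀ j, j < i → z j = 0 := fun j hj => hz0 (j : ℕ) j rfl hj
    -- z i = 1
    have hzi : z i = 1 := by
      have hj := congrFun hz i
      have hei : e i = 1 := by rw [he]; exact Pi.single_eq_same i 1
      rw [hei] at hj
      have hsum : (Uᵀ *ᵥ z) i = ∑ k, U k i * z k := by
        simp [Matrix.mulVec, dotProduct, Matrix.transpose_apply]
      rw [hsum] at hj
      have : ∑ k, U k i * z k = U i i * z i := by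
        refine Finset.sum_eq_single i (fun k _ hk => ?_) (by simp)
        rcases lt_or_gt_of_ne hk with h | h
        · rw [hz0' k h, mul_zero]
        · rw [hU0 k i h, zero_mul]
      rw [this, hU1 i, one_mul] at hj
      exact hj
    -- w = i-th column of U
    set w : Fin N → ℝ := U *ᵥ e with hwdef
    have hwi : w i = 1 := by
      rw [hwdef, he]
      simp [Matrix.mulVec_single, hU1 i]
    -- quadratic form values
    have hDe : Matrix.diagonal d *ᵥ e = d i • e := by
      ext j
      rw [Matrix.mulVec_diagonal]
      by_cases hji : j = i
      · subst hji; simp [he]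
      · simp [he, Pi.single_eq_of_ne hji]
    have hAz : A *ᵥ z = d i • w := by
      rw [hdecomp, ← Matrix.mulVec_mulVec, ← Matrix.mulVec_mulVec, hz, hDe, hwdef]
      rw [Matrix.mulVec_smul]
    have hzw : z ⬝ᵥ w = 1 := by
      rw [hwdef, Matrix.dotProduct_mulVec, ← Matrix.mulVec_transpose, hz, he]
      simp [dotProduct, Pi.single_apply]
    have hzAz : z ⬝ᵥ A *ᵥ z = d i := by
      rw [hAz, dotProduct_smul, smul_eq_mul, hzw, mul_one]
    have hAzAz : (A *ᵥ z) ⬝ᵥ (A *ᵥ z) = d i ^ 2 * (w ⬝ᵥ w) := by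
      rw [hAz, smul_dotProduct, dotProduct_smul, smul_eq_mul, smul_eq_mul]
      ring
    have hzz1 : (1 : ℝ) ≤ z ⬝ᵥ z := by
      have : (z i) ^ 2 ≤ ∑ k, (z k) ^ 2 :=
        Finset.single_le_sum (fun k _ => sq_nonneg (z k)) (Finset.mem_univ i)
      rw [hzi] at this
      simpa [dotProduct, sq] using this
    have hww1 : (1 : ℝ) ≤ w ⬝ᵥ w := by
      have : (w i) ^ 2 ≤ ∑ k, (w k) ^ 2 :=
        Finset.single_le_sum (fun k _ => sq_nonneg (w k)) (Finset.mem_univ i)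
      rw [hwi] at this
      simpa [dotProduct, sq] using this
    obtain ⟨hr1, hr2, hr3⟩ := hray z
    -- lower bound
    have hlow : lmin ≤ d i := by
      calc lmin = lmin * 1 := (mul_one _).symm
        _ ≤ lmin * (z ⬝ᵥ z) := by
            exact mul_le_mul_of_nonneg_left hzz1 hlminpos.le
        _ ≤ z ⬝ᵥ A *ᵥ z := hr1
        _ = d i := hzAz
    have hdpos : 0 < d i := lt_of_lt_of_le hlminpos hlow
    -- upper bound
    have hup : d i ≤ lmax := by
      rw [hzAz] at hr3
      rw [hAzAz] at hr3
      have h4 : d i * (w ⬝ᵥ w) ≤ lmax := by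
        have := (mul_le_mul_iff_of_pos_right hdpos).mp (by linarith [hr3] : (d i * (w ⬝ᵥ w)) * d i ≤ lmax * d i)
        exact this
      calc d i = d i * 1 := (mul_one _).symm
        _ ≤ d i * (w ⬝ᵥ w) := mul_le_mul_of_nonneg_left hww1 hdpos.le
        _ ≤ lmax := h4
    exact ⟨hlow, hup, hdpos⟩
  refine ⟨fun i => ⟨(key i).1, (key i).2.1⟩, fun i => (key i).2.2, ?_⟩
  have hne := Finset.univ_nonempty_iff.mpr (Fin.pos_iff_nonempty.mp hN)
  have hsup : Finset.univ.sup' hne d ≤ lmax :=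
    Finset.sup'_le hne d fun i _ => (key i).2.1
  have hinf : lmin ≤ Finset.univ.inf' hne d :=
    Finset.le_inf' hne d fun i _ => (key i).1
  have hlmaxpos : 0 < lmax := by
    obtain ⟨j, hj⟩ := hmax.1
    rw [← hj]; exact heigpos j
  exact div_le_div₀ hlmaxpos.le hsup hlminpos hinf
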